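/- Fix 0 < δ < 1, τ > 0, κ = √(π/2), m ≥ 1, x ∈ ℝ^n, a matrix Φ ∈ ℂ^{m×n} and ε ∈ ℂ^m with ‖ε‖_∞ ≤ τ. Set A = Φ/√m and assume the deterministic events: |‖Φx‖₁/(κm) − ‖x‖| ≤ δ‖x‖, ‖Φx‖₂²/m ≤ (1+δ)‖x‖₂², and ‖Φx‖₁ = κm. Then the vector A_ε x, where A_ε has rows (Re α_ε)ᵀ, (Im α_ε)ᵀ and Im(diag(ε)* A) with α_ε = A* ε/(κ√m), satisfies ‖A_ε x‖₂ ≤ √2 · τ · (1+δ)/(1−δ). -/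

import Mathlib

lemma noise_matrix_bound_aux (δ τ P Q N : ℝ) (hδ0 : 0 < δ) (hδ1 : δ < 1) (hτ : 0 < τ)
    (hN0 : 0 ≤ N) (hN : N * (1 - δ) ≤ 1) (hP : P ≤ τ ^ 2)
    (hQ : Q ≤ τ ^ 2 * ((1 + δ) * N ^ 2)) :
    P + Q ≤ 2 * τ ^ 2 * (1 + δ) ^ 2 / (1 - δ) ^ 2 := by
  have hδ' : (0:ℝ) < 1 - δ := by linarith
  rw [le_div_iff₀ (pow_pos hδ' 2)]
  have h01 : 0 ≤ N * (1 - δ) := mul_nonneg hN0 hδ'.le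
  have hNN : (N * (1 - δ)) ^ 2 ≤ 1 := by
    calc (N * (1 - δ)) ^ 2 ≤ 1 ^ 2 := pow_le_pow_left₀ h01 hN 2
      _ = 1 := one_pow 2
  nlinarith [mul_le_mul_of_nonneg_left hNN (show (0:ℝ) ≤ τ ^ 2 * (1 + δ) by positivity),
    mul_le_mul_of_nonneg_right hQ (sq_nonneg (1 - δ)),
    mul_le_mul_of_nonneg_right hP (sq_nonneg (1 - δ)),
    mul_nonneg (sq_nonneg τ) hδ0.le, mul_nonneg (sq_nonneg τ) (sq_nonneg δ)]

open Finset in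
theorem noise_matrix_bound {m n : ℕ} (hm : 1 ≤ m) (δ τ κ : ℝ)
    (hδ0 : 0 < δ) (hδ1 : δ < 1) (hτ : 0 < τ) (hκ : κ = Real.sqrt (Real.pi / 2))
    (x : Fin n → ℝ) (Φ : Matrix (Fin m) (Fin n) ℂ) (ε : Fin m → ℂ)
    (hε : ∀ k, ‖ε k‖ ≤ τ)
    (A : Matrix (Fin m) (Fin n) ℂ) (hA : A = ((1 / Real.sqrt m : ℝ) : ℂ) • Φ)
    (hconc1 : |(∑ k, ‖Φ.mulVec (fun j => (x j : ℂ)) k‖) / (κ * m) -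
        Real.sqrt (∑ j, x j ^ 2)| ≤ δ * Real.sqrt (∑ j, x j ^ 2))
    (hconc2 : (∑ k, ‖Φ.mulVec (fun j => (x j : ℂ)) k‖ ^ 2) / m ≤
        (1 + δ) * ∑ j, x j ^ 2)
    (hnorm : ∑ k, ‖Φ.mulVec (fun j => (x j : ℂ)) k‖ = κ * m)
    (αε : Fin n → ℂ)
    (hα : αε = fun j => (∑ k, (starRingEnd ℂ) (A k j) * ε k) / ((κ * Real.sqrt m : ℝ) : ℂ)) :
    Real.sqrt ((∑ j, (αε j).re * x j) ^ 2 + (∑ j, (αε j).im * x j) ^ 2 +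
        ∑ k, ((starRingEnd ℂ) (ε k) * A.mulVec (fun j => (x j : ℂ)) k).im ^ 2) ≤
      Real.sqrt 2 * τ * (1 + δ) / (1 - δ) := by
  have hm0 : (0:ℝ) < m := by exact_mod_cast hm
  have hsm : (0:ℝ) < Real.sqrt m := Real.sqrt_pos.2 hm0
  have hss : Real.sqrt m * Real.sqrt m = (m:ℝ) := Real.mul_self_sqrt hm0.le
  have hκ0 : (0:ℝ) < κ := by rw [hκ]; exact Real.sqrt_pos.2 (by positivity)
  set v := Φ.mulVec (fun j => (x j : ℂ)) with hv
  set N := Real.sqrt (∑ j, x j ^ 2) with hNdef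
  have hN0 : 0 ≤ N := Real.sqrt_nonneg _
  have hN2 : N ^ 2 = ∑ j, x j ^ 2 := Real.sq_sqrt (by positivity)
  rw [hnorm, div_self (by positivity)] at hconc1
  have hN : N * (1 - δ) ≤ 1 := by
    have := (abs_le.1 hconc1).1
    nlinarith
  set z := ∑ j, αε j * (x j : ℂ) with hzdef
  have hre : ∑ j, (αε j).re * x j = z.re := by
    rw [hzdef, Complex.re_sum]
    exact Finset.sum_congr rfl fun j _ => by simp [Complex.mul_re]
  have him : ∑ j, (αε j).im * x j = z.im := by
    rw [hzdef, Complex.im_sum]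
    exact Finset.sum_congr rfl fun j _ => by simp [Complex.mul_im]
  have hz2 : z = (∑ k, ε k * (starRingEnd ℂ) (v k)) / ((κ * m : ℝ) : ℂ) := by
    rw [hzdef, hα, hA, hv]
    simp only [Matrix.mulVec, dotProduct, Matrix.smul_apply, smul_eq_mul, map_mul,
      map_sum, Complex.conj_ofReal, div_mul_eq_mul_div, Finset.sum_div, Finset.sum_mul,
      Finset.mul_sum]
    rw [Finset.sum_comm]
    refine Finset.sum_congr rfl fun j _ => Finset.sum_congr rfl fun k _ => ?_
    have hsC : (Real.sqrt m : ℂ) * (Real.sqrt m : ℂ) = ((m:ℝ):ℂ) := by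
      rw [← Complex.ofReal_mul, hss]
    have h1 : ((κ : ℂ)) ≠ 0 := by exact_mod_cast hκ0.ne'
    have h2 : ((Real.sqrt m : ℝ):ℂ) ≠ 0 := by exact_mod_cast hsm.ne'
    have h3 : ((m:ℝ):ℂ) ≠ 0 := by exact_mod_cast hm0.ne'
    have h4 : ((m:ℕ):ℂ) ≠ 0 := Nat.cast_ne_zero.2 (by omega)
    have hsC' : ((Real.sqrt m : ℝ) : ℂ) * ((Real.sqrt m : ℝ) : ℂ) = ((m:ℕ):ℂ) := by
      exact_mod_cast hsC
    push_cast
    rw [← hsC']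
    field_simp
  have habsz : ‖z‖ ≤ τ := by
    rw [hz2, norm_div, Complex.norm_real, Real.norm_eq_abs, abs_of_pos (by positivity)]
    rw [div_le_iff₀ (by positivity)]
    calc ‖∑ k, ε k * (starRingEnd ℂ) (v k)‖
        ≤ ∑ k, ‖ε k * (starRingEnd ℂ) (v k)‖ :=
          norm_sum_le _ _
      _ ≤ ∑ k, τ * ‖v k‖ := by
          refine Finset.sum_le_sum fun k _ => ?_
          rw [norm_mul, Complex.norm_conj]
          exact mul_le_mul_of_nonneg_right (hε k) (norm_nonneg _)
      _ = τ * (κ * m) := by rw [← Finset.mul_sum, hnorm]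
  have hP : z.re ^ 2 + z.im ^ 2 ≤ τ ^ 2 := by
    have h : z.re ^ 2 + z.im ^ 2 = ‖z‖ ^ 2 := by
      rw [Complex.sq_norm, Complex.normSq_apply]; ring
    rw [h]
    exact pow_le_pow_left₀ (norm_nonneg _) habsz 2
  have hQ : ∑ k, ((starRingEnd ℂ) (ε k) * A.mulVec (fun j => (x j : ℂ)) k).im ^ 2
      ≤ τ ^ 2 * ((1 + δ) * N ^ 2) := by
    have hAx : ∀ k, A.mulVec (fun j => (x j : ℂ)) k = ((1 / Real.sqrt m : ℝ) : ℂ) * v k := by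
      intro k
      rw [hA, Matrix.smul_mulVec]
      simp [hv]
    calc ∑ k, ((starRingEnd ℂ) (ε k) * A.mulVec (fun j => (x j : ℂ)) k).im ^ 2
        ≤ ∑ k, τ ^ 2 * (1 / m * ‖v k‖ ^ 2) := by
          refine Finset.sum_le_sum fun k _ => ?_
          have h1 : |((starRingEnd ℂ) (ε k) * A.mulVec (fun j => (x j : ℂ)) k).im|
              ≤ ‖(starRingEnd ℂ) (ε k) * A.mulVec (fun j => (x j : ℂ)) k‖ :=
            Complex.abs_im_le_norm _
          have h2 : ‖(starRingEnd ℂ) (ε k) * A.mulVec (fun j => (x j : ℂ)) k‖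
              = ‖ε k‖ * (1 / Real.sqrt m * ‖v k‖) := by
            rw [hAx k, norm_mul, Complex.norm_conj, norm_mul, Complex.norm_real, Real.norm_eq_abs,
              abs_of_pos (by positivity)]
          have h3 : ((starRingEnd ℂ) (ε k) * A.mulVec (fun j => (x j : ℂ)) k).im ^ 2
              ≤ (‖ε k‖ * (1 / Real.sqrt m * ‖v k‖)) ^ 2 := by
            rw [← h2]
            calc ((starRingEnd ℂ) (ε k) * A.mulVec (fun j => (x j : ℂ)) k).im ^ 2
                = |((starRingEnd ℂ) (ε k) * A.mulVec (fun j => (x j : ℂ)) k).im| ^ 2 := by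
                  rw [sq_abs]
              _ ≤ _ := pow_le_pow_left₀ (abs_nonneg _) h1 2
          refine h3.trans ?_
          have hq : (1 / Real.sqrt m) ^ 2 = 1 / (m:ℝ) := by
            rw [div_pow, one_pow, sq, hss]
          calc (‖ε k‖ * (1 / Real.sqrt m * ‖v k‖)) ^ 2
              = ‖ε k‖ ^ 2 * ((1 / Real.sqrt m) ^ 2 * ‖v k‖ ^ 2) := by
                ring
            _ ≤ τ ^ 2 * ((1 / Real.sqrt m) ^ 2 * ‖v k‖ ^ 2) :=
                mul_le_mul_of_nonneg_right
                  (pow_le_pow_left₀ (norm_nonneg _) (hε k) 2) (by positivity)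
            _ = τ ^ 2 * (1 / m * ‖v k‖ ^ 2) := by rw [hq]
      _ = τ ^ 2 * ((∑ k, ‖v k‖ ^ 2) / m) := by
          rw [← Finset.mul_sum, ← Finset.mul_sum]
          ring
      _ ≤ τ ^ 2 * ((1 + δ) * ∑ j, x j ^ 2) :=
          mul_le_mul_of_nonneg_left hconc2 (by positivity)
      _ = τ ^ 2 * ((1 + δ) * N ^ 2) := by rw [hN2]
  have hδ' : (0:ℝ) < 1 - δ := by linarith
  have hRHS0 : 0 ≤ Real.sqrt 2 * τ * (1 + δ) / (1 - δ) :=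
    div_nonneg (by positivity) hδ'.le
  have hkey : (∑ j, (αε j).re * x j) ^ 2 + (∑ j, (αε j).im * x j) ^ 2 +
      ∑ k, ((starRingEnd ℂ) (ε k) * A.mulVec (fun j => (x j : ℂ)) k).im ^ 2
      ≤ (Real.sqrt 2 * τ * (1 + δ) / (1 - δ)) ^ 2 := by
    have hsq2 : Real.sqrt 2 ^ 2 = 2 := Real.sq_sqrt (by norm_num)
    have hrhs : (Real.sqrt 2 * τ * (1 + δ) / (1 - δ)) ^ 2
        = 2 * τ ^ 2 * (1 + δ) ^ 2 / (1 - δ) ^ 2 := by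
      rw [div_pow, mul_pow, mul_pow, hsq2]
    rw [hrhs, hre, him]
    have := noise_matrix_bound_aux δ τ (z.re ^ 2 + z.im ^ 2)
      (∑ k, ((starRingEnd ℂ) (ε k) * A.mulVec (fun j => (x j : ℂ)) k).im ^ 2) N
      hδ0 hδ1 hτ hN0 hN hP hQ
    linarith
  refine le_trans (Real.sqrt_le_sqrt hkey) ?_
  rw [Real.sqrt_sq hRHS0]
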